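/- arXiv:0801.0313 — 7 statements merged into one kernel-verified Lean document; each statement's English description precedes it below -/
import Mathlib

section
/- Let A be a commutative algebra and let (P_n) be a pseudo-finite sequence of prime ideals in A, i.e., every element a of A belonging to the union of the P_n lies in all but finitely many of the P_n. Then the union ⋃_n P_n is either a prime ideal of A or equal to A. -/
/-- A sequence of ideals is pseudo-finite if every element of the union of the
ideals lies in all but finitely many of them. -/
def PseudoFinite {A : Type*} [CommRing A] (P : ℕ → Ideal A) : Prop :=
  ∀ a : A, (∃ n, a ∈ P n) → {n | a ∉ P n}.Finite

/-- The union of a pseudo-finite sequence of prime ideals in a commutative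
algebra `A` is either a prime ideal of `A` or equal to `A`. -/
theorem union_pseudoFinite_primes_isPrime_or_univ {A : Type*} [CommRing A]
    (P : ℕ → Ideal A) (hprime : ∀ n, (P n).IsPrime) (hpf : PseudoFinite P) :
    (∃ Q : Ideal A, Q.IsPrime ∧ (Q : Set A) = ⋃ n, (P n : Set A)) ∨
      (⋃ n, (P n : Set A)) = Set.univ := by
  left
  refine ⟨{ carrier := ⋃ n, (P n : Set A)
            zero_mem' := Set.mem_iUnion.2 ⟨0, (P 0).zero_mem⟩
            add_mem' := ?_
            smul_mem' := ?_ }, ?_, rfl⟩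
  · rintro a b ha hb
    obtain ⟨m, hm⟩ := Set.mem_iUnion.1 ha
    obtain ⟨k, hk⟩ := Set.mem_iUnion.1 hb
    have hfa := hpf a ⟨m, hm⟩
    have hfb := hpf b ⟨k, hk⟩
    have : ({n | a ∉ P n} ∪ {n | b ∉ P n})ᶜ.Infinite :=
      (hfa.union hfb).infinite_compl
    obtain ⟨n, hn⟩ := this.nonempty
    simp only [Set.mem_compl_iff, Set.mem_union, Set.mem_setOf_eq, not_or, not_not] at hn
    exact Set.mem_iUnion.2 ⟨n, (P n).add_mem hn.1 hn.2⟩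
  · rintro r a ha
    obtain ⟨n, hn⟩ := Set.mem_iUnion.1 ha
    exact Set.mem_iUnion.2 ⟨n, (P n).smul_mem r hn⟩
  · constructor
    · intro h
      have h1 : (1 : A) ∈ ⋃ n, (P n : Set A) := by
        exact (Ideal.eq_top_iff_one _).mp h
      obtain ⟨n, hn⟩ := Set.mem_iUnion.1 h1
      exact (hprime n).ne_top (Ideal.eq_top_of_isUnit_mem _ hn isUnit_one)
    · intro a b hab
      obtain ⟨n, hn⟩ := Set.mem_iUnion.1 hab
      rcases (hprime n).mem_or_mem hn with h | h
      · exact Or.inl (Set.mem_iUnion.2 ⟨n, h⟩)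
      · exact Or.inr (Set.mem_iUnion.2 ⟨n, h⟩)
end

section
/- Let Ω be a locally compact Hausdorff space and let (P_n) be a countable family of prime ideals in C_0(Ω). Then ⋃_n P_n ≠ C_0(Ω). -/
open ZeroAtInfty

/-- `I` is an ideal of a non-unital commutative ring (as a set). -/
def IsIdeal {A : Type*} [NonUnitalCommRing A] (I : Set A) : Prop :=
  (0 : A) ∈ I ∧ (∀ a ∈ I, ∀ b ∈ I, a + b ∈ I) ∧ (∀ a ∈ I, -a ∈ I) ∧
    ∀ a ∈ I, ∀ b : A, a * b ∈ I

/-- `I` is a prime ideal of a non-unital commutative ring: a proper ideal such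
that `a * b ∈ I` implies `a ∈ I` or `b ∈ I`. -/
def IsPrimeIdeal {A : Type*} [NonUnitalCommRing A] (I : Set A) : Prop :=
  IsIdeal I ∧ I ≠ Set.univ ∧ ∀ a b : A, a * b ∈ I → a ∈ I ∨ b ∈ I

section Aux
open Filter

variable {Ω : Type*} [TopologicalSpace Ω]

lemma exists_c0 (b m : C₀(Ω, ℂ)) (F : Ω → ℂ)
    (hF0 : ∀ x, b x = 0 → F x = 0)
    (hFc : ContinuousOn F {x | b x ≠ 0})
    (hFm : ∀ x, ‖F x‖ ≤ ‖m x‖)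
    (hm : ∀ x, b x = 0 → m x = 0) :
    ∃ h : C₀(Ω, ℂ), ∀ x, h x = F x := by
  have hcont : Continuous F := by
    rw [continuous_iff_continuousAt]
    intro x
    by_cases hx : b x = 0
    · have : Tendsto F (nhds x) (nhds 0) := by
        apply squeeze_zero_norm hFm
        have : Tendsto (fun y => ‖m y‖) (nhds x) (nhds ‖m x‖) :=
          (map_continuous m).norm.continuousAt
        simpa [hm x hx] using this
      simpa [ContinuousAt, hF0 x hx] using this
    · exact hFc.continuousAt (IsOpen.mem_nhds
        (isOpen_ne.preimage (map_continuous b)) hx)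
  refine ⟨⟨⟨F, hcont⟩, ?_⟩, fun x => rfl⟩
  apply squeeze_zero_norm hFm
  simpa using (zero_at_infty m).norm

/-- From `a ^ 3 ∈ P`, prime, get `a ∈ P`. -/
lemma cube_mem {P : Set C₀(Ω, ℂ)} (hP : IsPrimeIdeal P) {a : C₀(Ω, ℂ)}
    (h : a * (a * a) ∈ P) : a ∈ P := by
  rcases hP.2.2 _ _ h with h1 | h2
  · exact h1
  · rcases hP.2.2 _ _ h2 with h1 | h1 <;> exact h1

/-- Domination lemma: if `0 ≤ a ≤ b` (pointwise real) and `b ∈ P` prime, then `a ∈ P`. -/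
lemma dom_mem {P : Set C₀(Ω, ℂ)} (hP : IsPrimeIdeal P) {a b : C₀(Ω, ℂ)}
    (ha : ∀ x, (a x).im = 0 ∧ 0 ≤ (a x).re)
    (hb : ∀ x, (b x).im = 0)
    (hab : ∀ x, (a x).re ≤ (b x).re)
    (hbP : b ∈ P) : a ∈ P := by
  have haR : ∀ x, a x = ((a x).re : ℂ) := fun x => by
    apply Complex.ext <;> simp [(ha x).1]
  have hbR : ∀ x, b x = ((b x).re : ℂ) := fun x => by
    apply Complex.ext <;> simp [hb x]
  have hb0 : ∀ x, b x = 0 → a x = 0 := by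
    intro x hx
    have : (b x).re = 0 := by rw [hx]; simp
    have h2 : (a x).re = 0 := le_antisymm (this ▸ hab x) (ha x).2
    rw [haR x, h2]; simp
  have key : ∀ x, ‖a x ^ 3 / b x‖ ≤ ‖(a * a) x‖ := by
    intro x
    by_cases hx : b x = 0
    · simp [hb0 x hx]
    · have hbpos : 0 < (b x).re := by
        rcases lt_or_eq_of_le (le_trans (ha x).2 (hab x)) with h | h
        · exact h
        · exact absurd (by rw [hbR x, ← h]; simp) hx
      have hna : ‖a x‖ = (a x).re := by rw [haR x]; simp [abs_of_nonneg (ha x).2]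
      have hnb : ‖b x‖ = (b x).re := by rw [hbR x]; simp [abs_of_nonneg hbpos.le]
      rw [norm_div, norm_pow, ZeroAtInftyContinuousMap.mul_apply, norm_mul]
      rw [div_le_iff₀ (by rw [hnb]; exact hbpos)]
      calc ‖a x‖ ^ 3 = ‖a x‖ * ‖a x‖ * ‖a x‖ := by ring
        _ ≤ ‖a x‖ * ‖a x‖ * ‖b x‖ := by
            apply mul_le_mul_of_nonneg_left _ (by positivity)
            rw [hna, hnb]; exact hab x
  obtain ⟨h, hh⟩ := exists_c0 b (a * a) (fun x => a x ^ 3 / b x)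
    (fun x hx => by simp [hb0 x hx])
    (by
      apply ContinuousOn.div
      · exact ((map_continuous a).pow 3).continuousOn
      · exact (map_continuous b).continuousOn
      · exact fun x hx => hx)
    key
    (fun x hx => by simp [ZeroAtInftyContinuousMap.mul_apply, hb0 x hx])
  have hba : a * (a * a) = b * h := by
    ext x
    simp only [ZeroAtInftyContinuousMap.mul_apply, hh x]
    by_cases hx : b x = 0
    · simp [hx, hb0 x hx]
    · field_simp
  exact cube_mem hP (hba ▸ hP.1.2.2.2 b hbP h)

/-- Every prime ideal in `C₀(Ω,ℂ)` misses some pointwise-nonneg real element. -/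
lemma exists_nonneg_not_mem {P : Set C₀(Ω, ℂ)} (hP : IsPrimeIdeal P) :
    ∃ u : C₀(Ω, ℂ), (∀ x, (u x).im = 0 ∧ 0 ≤ (u x).re) ∧ u ∉ P := by
  obtain ⟨g, -, hg⟩ : ∃ g, g ∈ (Set.univ : Set C₀(Ω, ℂ)) ∧ g ∉ P := by
    rcases Set.exists_of_ssubset (Set.ssubset_univ_iff.mpr hP.2.1) with ⟨g, hg1, hg2⟩
    exact ⟨g, trivial, hg2⟩
  refine ⟨star g * g, fun x => ?_, fun hu => ?_⟩
  · have : (star g * g) x = star (g x) * g x := rfl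
    rw [this, Complex.star_def, Complex.conj_mul']
    constructor
    · simp [← Complex.ofReal_pow]
    · rw [← Complex.ofReal_pow, Complex.ofReal_re]; exact sq_nonneg _
  · -- star g * g ∈ P  ⟹  star g ∈ P or g ∈ P
    rcases hP.2.2 _ _ hu with hs | hgP
    · -- star g ∈ P; then g³ = star g * k with k = g³ / star g
      have hsz : ∀ x : Ω, (star g) x = star (g x) := fun _ => rfl
      obtain ⟨k, hk⟩ := exists_c0 (star g) (star g * g) (fun x => g x ^ 3 / star (g x))
        (fun x hx => by
          have : g x = 0 := by simpa [hsz, star_eq_zero] using hx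
          simp [this])
        (by
          apply ContinuousOn.div
          · exact ((map_continuous g).pow 3).continuousOn
          · exact (continuous_star.comp (map_continuous g)).continuousOn
          · exact fun x hx => by simpa [hsz] using hx)
        (fun x => by
          by_cases hx : g x = 0
          · simp [hx]
          · have : (star g * g) x = star (g x) * g x := rfl
            rw [this, norm_div, norm_pow, norm_mul, norm_star]
            rw [div_le_iff₀ (by simpa [norm_pos_iff, star_eq_zero] using hx)]
            ring_nf
            exact le_rfl)
        (fun x hx => by
          have : g x = 0 := by simpa [hsz, star_eq_zero] using hx
          have h2 : (star g * g) x = star (g x) * g x := rfl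
          simp [h2, this])
      have : g * (g * g) = star g * k := by
        ext x
        simp only [ZeroAtInftyContinuousMap.mul_apply, hk x, hsz]
        by_cases hx : g x = 0
        · simp [hx]
        · have hsne : (starRingEnd ℂ) (g x) ≠ 0 := by simpa [star_eq_zero] using hx
          rw [Complex.star_def, mul_div_cancel₀ _ hsne]; ring
      exact hg (cube_mem hP (this ▸ hP.1.2.2.2 _ hs k))
    · exact hg hgP

/-- For each prime ideal `P` and `n`, there is a pointwise-nonneg real element
outside `P` bounded by `(1/2)^n`. -/
lemma exists_small_not_mem {P : Set C₀(Ω, ℂ)} (hP : IsPrimeIdeal P) (n : ℕ) :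
    ∃ v : C₀(Ω, ℂ), (∀ x, (v x).im = 0 ∧ 0 ≤ (v x).re ∧ (v x).re ≤ (1/2) ^ n) ∧ v ∉ P := by
  obtain ⟨u, hu, huP⟩ := exists_nonneg_not_mem hP
  have huR : ∀ x, u x = ((u x).re : ℂ) := fun x => by
    apply Complex.ext <;> simp [(hu x).1]
  have hden : ∀ x, (1 : ℂ) + u x ≠ 0 := by
    intro x h
    have : ((1 : ℂ) + u x).re = 0 := by rw [h]; simp
    simp only [Complex.add_re, Complex.one_re] at this
    linarith [(hu x).2]
  -- the function F x = (1/2)^n * u x / (1 + u x)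
  set F : Ω → ℂ := fun x => ((((1:ℝ)/2) ^ n : ℝ) : ℂ) * (u x / (1 + u x)) with hF
  obtain ⟨v, hv⟩ := exists_c0 u u F
    (fun x hx => by simp [hF, hx])
    ((continuous_const.mul ((map_continuous u).div
      (continuous_const.add (map_continuous u)) hden)).continuousOn)
    (fun x => by
      have h1 : ‖(1 : ℂ) + u x‖ ≥ 1 := by
        calc (1:ℝ) ≤ ((1:ℂ) + u x).re := by simp [Complex.add_re, (hu x).2]
          _ ≤ |((1:ℂ) + u x).re| := le_abs_self _
          _ ≤ ‖(1:ℂ) + u x‖ := Complex.abs_re_le_norm _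
      have h2 : ‖((((1:ℝ)/2) ^ n : ℝ) : ℂ)‖ ≤ 1 := by
        rw [Complex.norm_real, Real.norm_eq_abs, abs_of_nonneg (by positivity)]
        exact pow_le_one₀ (by norm_num) (by norm_num)
      calc ‖F x‖ = ‖((((1:ℝ)/2) ^ n : ℝ) : ℂ)‖ * (‖u x‖ / ‖1 + u x‖) := by
            rw [hF]; simp [norm_mul, norm_div]
        _ ≤ 1 * (‖u x‖ / 1) := by
            apply mul_le_mul h2 _ (by positivity) zero_le_one
            apply div_le_div_of_nonneg_left (norm_nonneg _) zero_lt_one h1 |>.trans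
            · exact le_rfl
        _ = ‖u x‖ := by ring)
    (fun x hx => hx)
  have hvx : ∀ x, v x = (((1/2 : ℝ) ^ n * ((u x).re / (1 + (u x).re)) : ℝ) : ℂ) := by
    intro x
    rw [hv x, hF]
    push_cast
    ring_nf
    conv_lhs => rw [huR x]
  refine ⟨v, fun x => ?_, fun hvP => ?_⟩
  · rw [hvx x]
    have h0 : 0 ≤ (u x).re := (hu x).2
    have hq0 : 0 ≤ (u x).re / (1 + (u x).re) := by positivity
    have hq1 : (u x).re / (1 + (u x).re) ≤ 1 := by
      rw [div_le_one (by linarith)]; linarith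
    refine ⟨Complex.ofReal_im _, ?_, ?_⟩
    · rw [Complex.ofReal_re]; positivity
    · rw [Complex.ofReal_re]
      calc (1/2:ℝ) ^ n * ((u x).re / (1 + (u x).re)) ≤ (1/2:ℝ) ^ n * 1 :=
            mul_le_mul_of_nonneg_left hq1 (by positivity)
        _ = (1/2) ^ n := by ring
  · -- v ∈ P ⟹ u * u = v * e ∈ P ⟹ u ∈ P, contradiction
    set e : C₀(Ω, ℂ) := ((2 : ℂ) ^ n) • (u * u + u) with he
    have key : u * u = v * e := by
      ext x
      have hex : e x = (2:ℂ)^n * ((u x) * (u x) + u x) := rfl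
      rw [ZeroAtInftyContinuousMap.mul_apply, ZeroAtInftyContinuousMap.mul_apply,
        hvx x, hex, huR x]
      set r := (u x).re with hr
      have h0 : 0 ≤ r := (hu x).2
      have h1 : (1:ℝ) + r ≠ 0 := by linarith
      have hreal : (1/2:ℝ)^n * (r/(1+r)) * (2^n * (r*r+r)) = r * r := by
        have h2 : (1/2:ℝ)^n * 2^n = 1 := by
          rw [← mul_pow]; norm_num
        field_simp
        linear_combination (r^2 + r^3) * h2
      calc (↑r : ℂ) * ↑r = ((r*r : ℝ) : ℂ) := by push_cast; ring
        _ = (((1/2:ℝ)^n * (r/(1+r)) * (2^n * (r*r+r)) : ℝ) : ℂ) := by rw [hreal]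
        _ = ↑((1/2:ℝ) ^ n * (r / (1 + r))) * ((2:ℂ) ^ n * (↑r * ↑r + ↑r)) := by
            push_cast; ring
    have huu : u * u ∈ P := by rw [key]; exact hP.1.2.2.2 v hvP e
    rcases hP.2.2 _ _ huu with h | h <;> exact huP h


end Aux

/-- The union of countably many prime ideals in `C₀(Ω)` is not all of `C₀(Ω)`. -/
theorem union_countably_many_primes_ne_univ {Ω : Type*} [TopologicalSpace Ω]
    [LocallyCompactSpace Ω] [T2Space Ω]
    (P : ℕ → Set C₀(Ω, ℂ)) (hP : ∀ n, IsPrimeIdeal (P n)) :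
    (⋃ n, P n) ≠ Set.univ := by
  -- choose small elements outside each `P n`
  choose fn hfn hfnP using fun n => exists_small_not_mem (hP n) n
  -- summability
  have hnorm : ∀ n, ‖fn n‖ ≤ (1/2 : ℝ) ^ n := by
    intro n
    rw [← ZeroAtInftyContinuousMap.norm_toBCF_eq_norm]
    rw [BoundedContinuousFunction.norm_le (by positivity)]
    intro x
    obtain ⟨h1, h2, h3⟩ := hfn n x
    have : fn n x = (((fn n x).re : ℝ) : ℂ) := by
      apply Complex.ext <;> simp [h1]
    calc ‖(fn n).toBCF x‖ = ‖fn n x‖ := rfl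
      _ = |(fn n x).re| := by rw [this, Complex.norm_real, Real.norm_eq_abs]; simp
      _ = (fn n x).re := abs_of_nonneg h2
      _ ≤ (1/2) ^ n := h3
  have hsum : Summable fn :=
    Summable.of_norm_bounded summable_geometric_two (by
      intro n
      simpa using hnorm n)
  set f : C₀(Ω, ℂ) := ∑' n, fn n with hfdef
  have hs : HasSum fn f := hsum.hasSum
  -- pointwise sums
  have hsx : ∀ x : Ω, HasSum (fun n => fn n x) (f x) := by
    intro x
    have hs2 : HasSum (fun n => (fn n).toBCF) f.toBCF :=
      hs.map (AddMonoidHom.mk' ZeroAtInftyContinuousMap.toBCF (fun a b => rfl))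
        (ZeroAtInftyContinuousMap.isometry_toBCF).continuous
    have hs3 := hs2.map (BoundedContinuousFunction.evalCLM ℂ x).toAddMonoidHom
      (BoundedContinuousFunction.evalCLM ℂ x).continuous
    exact hs3
  have him : ∀ x : Ω, (f x).im = 0 := by
    intro x
    have := (hsx x).map Complex.imCLM Complex.imCLM.continuous
    have h0 : HasSum (fun n => ((fn n x).im : ℝ)) 0 := by
      convert hasSum_zero with n
      exact (hfn n x).1
    exact (HasSum.unique this h0)
  have hre : ∀ (x : Ω) (m : ℕ), (fn m x).re ≤ (f x).re := by
    intro x m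
    have hres : HasSum (fun n => ((fn n x).re : ℝ)) ((f x).re) :=
      (hsx x).map Complex.reCLM Complex.reCLM.continuous
    rw [← hres.tsum_eq]
    exact Summable.le_tsum hres.summable m (fun j _ => (hfn j x).2.1)
  intro hU
  have hfU : f ∈ ⋃ n, P n := hU ▸ Set.mem_univ f
  obtain ⟨m, hfm⟩ := Set.mem_iUnion.mp hfU
  exact hfnP m (dom_mem (hP m) (fun x => ⟨(hfn m x).1, (hfn m x).2.1⟩) him
    (fun x => hre x m) hfm)
end

section
/- Let A be a commutative ring, J a semiprime ideal (i.e., a radical ideal) in A, and a, b ∈ A such that the quotient ideals (J : a) = {x ∈ A : ax ∈ J} and (J : b) = {x ∈ A : bx ∈ J} are both prime ideals. Then the following are equivalent: (a) (J : a) ⊆ (J : b); (b) ab ∉ J; (c) (J : a) = (J : b). -/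
/-- The quotient ideal `(J : a) = {x | a * x ∈ J}`. -/
def quotIdeal {A : Type*} [CommRing A] (J : Ideal A) (a : A) : Ideal A where
  carrier := {x | a * x ∈ J}
  zero_mem' := by simp
  add_mem' := by
    intro x y hx hy
    simpa [mul_add] using J.add_mem hx hy
  smul_mem' := by
    intro c x hx
    simp only [smul_eq_mul, Set.mem_setOf_eq, mul_left_comm a c x] at *
    exact J.mul_mem_left c hx

lemma mem_quotIdeal {A : Type*} [CommRing A] (J : Ideal A) (a x : A) :
    x ∈ quotIdeal J a ↔ a * x ∈ J := Iff.rfl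

lemma quotIdeal_le_of_not_mem {A : Type*} [CommRing A] (J : Ideal A) (a b : A)
    (hb : (quotIdeal J b).IsPrime) (hab : a * b ∉ J) :
    quotIdeal J a ≤ quotIdeal J b := by
  intro x hx
  rw [mem_quotIdeal] at hx ⊢
  have h1 : b * (a * x) ∈ J := J.mul_mem_left b hx
  have h2 : a * x ∈ quotIdeal J b := by rwa [mem_quotIdeal]
  rcases hb.mem_or_mem h2 with h | h
  · exact absurd (by rwa [mem_quotIdeal, mul_comm] at h) hab
  · rwa [mem_quotIdeal] at h

/-- For a semiprime (radical) ideal `J` and elements `a`, `b` such that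
`(J : a)` and `(J : b)` are prime, the following are equivalent:
(a) `(J : a) ⊆ (J : b)`; (b) `a * b ∉ J`; (c) `(J : a) = (J : b)`. -/
theorem quotIdeal_prime_tfae {A : Type*} [CommRing A] (J : Ideal A)
    (hJ : ∀ (x : A) (n : ℕ), x ^ n ∈ J → x ∈ J) (a b : A)
    (ha : (quotIdeal J a).IsPrime) (hb : (quotIdeal J b).IsPrime) :
    (quotIdeal J a ≤ quotIdeal J b ↔ a * b ∉ J) ∧
      (a * b ∉ J ↔ quotIdeal J a = quotIdeal J b) := by
  have key : quotIdeal J a ≤ quotIdeal J b → a * b ∉ J := by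
    intro hle hab
    have hbJa : b ∈ quotIdeal J a := by rwa [mem_quotIdeal]
    have hb2 : b * b ∈ J := hle hbJa
    have hbJ : b ∈ J := hJ b 2 (by rwa [pow_two])
    have h1 : (1 : A) ∈ quotIdeal J b := by
      rw [mem_quotIdeal, mul_one]; exact hbJ
    exact hb.ne_top (Ideal.eq_top_of_isUnit_mem _ h1 isUnit_one)
  have key2 : a * b ∉ J → quotIdeal J a = quotIdeal J b := by
    intro hab
    exact le_antisymm (quotIdeal_le_of_not_mem J a b hb hab)
      (quotIdeal_le_of_not_mem J b a ha (by rwa [mul_comm]))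
  exact ⟨⟨key, fun h => (key2 h).le⟩, ⟨key2, fun h => key h.le⟩⟩
end

section
/- Let A be a commutative algebra and let 𝔓 be a relatively compact family of prime ideals in A, i.e., every sequence in 𝔓 has a pseudo-finite subsequence. Then the intersection I = ⋂{P : P ∈ 𝔓} is an abstract continuity ideal: for every sequence (a_n) in A there exists n_0 such that (I : a_1⋯a_n) = (I : a_1⋯a_{n+1}) for all n ≥ n_0. -/
/-- An ideal `I` is an abstract continuity ideal if for every sequence
`(a n)` the increasing chain of quotient ideals `(I : a 0 ⋯ a (n-1))`
eventually stabilizes. -/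
def AbstractContinuityIdeal {A : Type*} [CommRing A] (I : Ideal A) : Prop :=
  ∀ a : ℕ → A, ∃ n₀ : ℕ, ∀ n ≥ n₀,
    quotIdeal I (∏ i ∈ Finset.range n, a i) =
      quotIdeal I (∏ i ∈ Finset.range (n + 1), a i)

/-- A family of prime ideals is relatively compact if every sequence in it has
a pseudo-finite subsequence. -/
def RelativelyCompactFamily {A : Type*} [CommRing A] (𝔓 : Set (Ideal A)) : Prop :=
  ∀ P : ℕ → Ideal A, (∀ n, P n ∈ 𝔓) →
    ∃ φ : ℕ → ℕ, StrictMono φ ∧ PseudoFinite (fun n => P (φ n))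

/-- The intersection of a relatively compact family of prime ideals is an
abstract continuity ideal. -/
theorem sInf_relativelyCompact_is_ACI {A : Type*} [CommRing A]
    (𝔓 : Set (Ideal A)) (hprime : ∀ P ∈ 𝔓, P.IsPrime)
    (hrc : RelativelyCompactFamily 𝔓) :
    AbstractContinuityIdeal (sInf 𝔓) := by
  intro a
  by_contra h
  push_neg at h
  set I := sInf 𝔓 with hI
  set p : ℕ → A := fun n => ∏ i ∈ Finset.range n, a i with hp
  have hmem_quot : ∀ (b : A) (y : A), y ∈ quotIdeal I b ↔ b * y ∈ I := fun _ _ => Iff.rfl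
  have hle : ∀ n, quotIdeal I (p n) ≤ quotIdeal I (p (n + 1)) := by
    intro n y hy
    rw [hmem_quot] at hy ⊢
    have hmul : p (n + 1) * y = a n * (p n * y) := by
      simp only [hp, Finset.prod_range_succ]; ring
    rw [hmul]
    exact I.mul_mem_left _ hy
  choose f hf1 hf2 using h
  let g : ℕ → ℕ := fun k => Nat.rec (f 0) (fun _ m => f (m + 1)) k
  have hg0 : ∀ k, g (k + 1) = f (g k + 1) := fun k => rfl
  have hgstrict : StrictMono g := by
    apply strictMono_nat_of_lt_succ
    intro k
    rw [hg0]
    exact lt_of_lt_of_le (Nat.lt_succ_self _) (hf1 _)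
  have hgS : ∀ k, quotIdeal I (p (g k)) ≠ quotIdeal I (p (g k + 1)) := by
    intro k
    cases k with
    | zero => exact hf2 0
    | succ k => rw [hg0]; exact hf2 _
  have hx : ∀ k, ∃ y, y ∈ quotIdeal I (p (g k + 1)) ∧ y ∉ quotIdeal I (p (g k)) :=
    fun k => SetLike.exists_of_lt (lt_of_le_of_ne (hle (g k)) (hgS k))
  choose x hx1 hx2 using hx
  have hP : ∀ k, ∃ P ∈ 𝔓, p (g k) * x k ∉ P := by
    intro k
    by_contra hc
    push_neg at hc
    exact hx2 k ((hmem_quot _ _).2 (Ideal.mem_sInf.2 fun {P} hPm => hc P hPm))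
  choose P hPmem hPnot using hP
  have hain : ∀ k, a (g k) ∈ P k := by
    intro k
    have hprod : a (g k) * (p (g k) * x k) ∈ P k := by
      have heq : a (g k) * (p (g k) * x k) = p (g k + 1) * x k := by
        simp only [hp, Finset.prod_range_succ]; ring
      rw [heq]
      exact Ideal.mem_sInf.1 ((hmem_quot _ _).1 (hx1 k)) (hPmem k)
    rcases (hprime (P k) (hPmem k)).mem_or_mem hprod with h1 | h1
    · exact h1
    · exact absurd h1 (hPnot k)
  have hanotin : ∀ k i, i < g k → a i ∉ P k := by
    intro k i hi hmemi
    apply hPnot k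
    obtain ⟨c, hc⟩ : a i ∣ p (g k) := Finset.dvd_prod_of_mem a (Finset.mem_range.2 hi)
    have : p (g k) ∈ P k := hc ▸ Ideal.mul_mem_right _ _ hmemi
    exact Ideal.mul_mem_right _ _ this
  obtain ⟨φ, hφ, hpf⟩ := hrc (fun k => P k) hPmem
  have hfin := hpf (a (g (φ 0))) ⟨0, hain (φ 0)⟩
  have hsub : Set.Ici 1 ⊆ {n | a (g (φ 0)) ∉ P (φ n)} := by
    intro m hm
    exact hanotin (φ m) (g (φ 0)) (hgstrict (hφ (Nat.lt_of_lt_of_le Nat.zero_lt_one hm)))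
  exact Set.Infinite.mono hsub (Set.Ici_infinite 1) hfin
end

section
/- Let A be a commutative algebra, I an abstract continuity ideal in A, and let 𝔓 denote the set of prime ideals of the form (I : a) for a ∈ A. Then for every P ∈ 𝔓 there exists a ∈ A with a ∉ P but a ∈ Q for every Q ∈ 𝔓 with Q ⊄ P. -/
/-- Let `I` be an abstract continuity ideal and `𝔓` the set of prime ideals
of the form `(I : a)`. For every `P ∈ 𝔓` there exists `a ∉ P` with
`a ∈ Q` for every `Q ∈ 𝔓` not contained in `P`. -/
theorem witness_for_prime_quotIdeal {A : Type*} [CommRing A]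
    (I : Ideal A) (hI : AbstractContinuityIdeal I)
    (𝔓 : Set (Ideal A)) (h𝔓 : 𝔓 = {P | (∃ a : A, P = quotIdeal I a) ∧ P.IsPrime})
    (P : Ideal A) (hP : P ∈ 𝔓) :
    ∃ a : A, a ∉ P ∧ ∀ Q ∈ 𝔓, ¬ Q ≤ P → a ∈ Q := by
  classical
  by_contra hcon
  push_neg at hcon
  rw [h𝔓] at hP
  obtain ⟨-, hPp⟩ := hP
  -- From the negation: for each x ∉ P, find d (with (I:d) prime, x ∉ (I:d))
  -- and q ∈ (I:d) \ P.
  have key : ∀ x : A, x ∉ P → ∃ d q : A, d * x ∉ I ∧ d * q ∈ I ∧ q ∉ P := by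
    intro x hx
    obtain ⟨Q, hQ, hQP, hxQ⟩ := hcon x hx
    rw [h𝔓] at hQ
    obtain ⟨⟨d, rfl⟩, -⟩ := hQ
    obtain ⟨q, hq, hqP⟩ := SetLike.not_le_iff_exists.mp hQP
    exact ⟨d, q, hxQ, hq, hqP⟩
  have one_notin : (1 : A) ∉ P := fun h => hPp.ne_top ((Ideal.eq_top_iff_one P).mpr h)
  -- iterate: state is the current product, which stays outside P
  let step : {x : A // x ∉ P} → {x : A // x ∉ P} := fun s =>
    ⟨s.1 * (key s.1 s.2).choose_spec.choose, fun h =>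
      ((hPp.mem_or_mem h).elim s.2 (key s.1 s.2).choose_spec.choose_spec.2.2)⟩
  let s : ℕ → {x : A // x ∉ P} := fun n => step^[n] ⟨1, one_notin⟩
  let a : ℕ → A := fun n => (key (s n).1 (s n).2).choose_spec.choose
  have hs_succ : ∀ n, (s (n + 1)).1 = (s n).1 * a n := by
    intro n
    simp only [s, Function.iterate_succ_apply']
    rfl
  have hprod : ∀ n, ∏ i ∈ Finset.range n, a i = (s n).1 := by
    intro n
    induction n with
    | zero => simp [s]
    | succ n ih => rw [Finset.prod_range_succ, ih, hs_succ]
  obtain ⟨n₀, hn₀⟩ := hI a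
  have heq := hn₀ n₀ le_rfl
  set π := (s n₀).1 with hπ
  have hspec := (key π (s n₀).2).choose_spec.choose_spec
  set d := (key π (s n₀).2).choose with hd
  have hd_in : d ∈ quotIdeal I (∏ i ∈ Finset.range (n₀ + 1), a i) := by
    rw [mem_quotIdeal, Finset.prod_range_succ, hprod]
    have : π * a n₀ * d = π * (d * a n₀) := by ring
    rw [this]
    exact I.mul_mem_left π hspec.2.1
  have hd_notin : d ∉ quotIdeal I (∏ i ∈ Finset.range n₀, a i) := by
    rw [mem_quotIdeal, hprod, mul_comm]
    exact hspec.1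
  rw [heq] at hd_notin
  exact hd_notin hd_in
end

section
/- Let A be a commutative ring, Π its set of prime ideals, and τ the topology on Π generated by the sets U^b_{a_1,...,a_m} = {P prime : a_1,...,a_m ∈ P, b ∉ P}. Then (Π, τ) is Hausdorff. -/
/-- The basic set `U^b_{a₁,…,a_m} = {P prime : aᵢ ∈ P for all i, b ∉ P}`,
viewed as a subset of the set `Π` of prime ideals of `A`. -/
def basicSet {A : Type*} [CommRing A] {m : ℕ} (a : Fin m → A) (b : A) :
    Set {P : Ideal A // P.IsPrime} :=
  {P | (∀ i, a i ∈ P.1) ∧ b ∉ P.1}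

/-- The collection of all basic sets. -/
def basicSets (A : Type*) [CommRing A] : Set (Set {P : Ideal A // P.IsPrime}) :=
  {S | ∃ (m : ℕ) (a : Fin m → A) (b : A), S = basicSet a b}

/-- Separation helper: if `b ∉ P` and `b ∈ Q`, we can separate `P` and `Q`
by basic open sets. -/
lemma basicSets_sep {A : Type*} [CommRing A]
    (P Q : {P : Ideal A // P.IsPrime}) (b : A) (hbP : b ∉ P.1) (hbQ : b ∈ Q.1) :
    ∃ u v : Set {P : Ideal A // P.IsPrime},
      TopologicalSpace.GenerateOpen (basicSets A) u ∧
      TopologicalSpace.GenerateOpen (basicSets A) v ∧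
      P ∈ u ∧ Q ∈ v ∧ Disjoint u v := by
  refine ⟨basicSet (fun _ : Fin 0 => 0) b, basicSet (fun _ : Fin 1 => b) 1,
    TopologicalSpace.GenerateOpen.basic _ ⟨0, _, b, rfl⟩,
    TopologicalSpace.GenerateOpen.basic _ ⟨1, _, 1, rfl⟩,
    ⟨fun i => i.elim0, hbP⟩,
    ⟨fun _ => hbQ, fun h => Q.2.ne_top (Ideal.eq_top_iff_one _ |>.2 h)⟩, ?_⟩
  rw [Set.disjoint_left]
  rintro R ⟨-, hbR⟩ ⟨hbR', -⟩
  exact hbR (hbR' 0)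

/-- The topology `τ` on the set of prime ideals generated by the basic sets
`U^b_{a₁,…,a_m}` is Hausdorff. -/
theorem basicSets_topology_t2 (A : Type*) [CommRing A] :
    @T2Space {P : Ideal A // P.IsPrime}
      (TopologicalSpace.generateFrom (basicSets A)) := by
  letI := TopologicalSpace.generateFrom (basicSets A)
  constructor
  intro P Q hPQ
  have h : ∃ b, (b ∈ P.1 ∧ b ∉ Q.1) ∨ (b ∈ Q.1 ∧ b ∉ P.1) := by
    by_contra h
    push_neg at h
    exact hPQ (Subtype.ext (SetLike.ext fun x => by
      have := h x; constructor <;> intro hx <;> by_contra hx' <;> tauto))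
  obtain ⟨b, hb | hb⟩ := h
  · obtain ⟨u, v, hu, hv, hQu, hPv, huv⟩ := basicSets_sep Q P b hb.2 hb.1
    exact ⟨v, u, hv, hu, hPv, hQu, huv.symm⟩
  · obtain ⟨u, v, hu, hv, hPu, hQv, huv⟩ := basicSets_sep P Q b hb.2 hb.1
    exact ⟨u, v, hu, hv, hPu, hQv, huv⟩
end

section
/- Let A be a commutative ring, Π its prime spectrum with the topology τ generated by the sets U^b_{a_1,...,a_m} = {P prime : a_i ∈ P (1 ≤ i ≤ m), b ∉ P}. Then for each u ∈ A, the set U^u_0 = {P prime : u ∉ P} is compact in τ. -/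
/-- For each `u ∈ A`, the set `U^u_0 = {P prime : u ∉ P}` is compact in the
topology generated by the basic sets. -/
theorem basicSet_compl_compact (A : Type*) [CommRing A] (u : A) :
    @IsCompact {P : Ideal A // P.IsPrime}
      (TopologicalSpace.generateFrom (basicSets A))
      {P : {P : Ideal A // P.IsPrime} | u ∉ P.1} := by
  letI : TopologicalSpace {P : Ideal A // P.IsPrime} :=
    TopologicalSpace.generateFrom (basicSets A)
  rw [isCompact_iff_ultrafilter_le_nhds]
  intro F hF
  have hFu : {P : {P : Ideal A // P.IsPrime} | u ∉ P.1} ∈ F :=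
    Filter.le_principal_iff.mp hF
  -- the limit prime ideal
  set P₀ : Ideal A :=
    { carrier := {a | {Q : {P : Ideal A // P.IsPrime} | a ∈ Q.1} ∈ F}
      zero_mem' := Filter.mem_of_superset Filter.univ_mem
        (fun Q _ => Q.1.zero_mem)
      add_mem' := fun hx hy => Filter.mem_of_superset (Filter.inter_mem hx hy)
        (fun Q hQ => Q.1.add_mem hQ.1 hQ.2)
      smul_mem' := fun c x hx => Filter.mem_of_superset hx
        (fun Q hQ => Q.1.mul_mem_left c hQ) } with hP₀
  have hmem : ∀ a : A, a ∈ P₀ ↔ {Q : {P : Ideal A // P.IsPrime} | a ∈ Q.1} ∈ F :=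
    fun a => Iff.rfl
  have hprime : P₀.IsPrime := by
    constructor
    · intro htop
      have h1 : (1 : A) ∈ P₀ := htop ▸ Submodule.mem_top
      have : {Q : {P : Ideal A // P.IsPrime} | (1 : A) ∈ Q.1} = ∅ := by
        ext Q
        simp only [Set.mem_setOf_eq, Set.mem_empty_iff_false, iff_false]
        exact fun h => Q.2.ne_top (Ideal.eq_top_of_isUnit_mem _ h isUnit_one)
      exact F.empty_notMem (this ▸ (hmem 1).mp h1)
    · intro x y hxy
      have h := (hmem (x * y)).mp hxy
      have hsub : {Q : {P : Ideal A // P.IsPrime} | x * y ∈ Q.1} ⊆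
          {Q : {P : Ideal A // P.IsPrime} | x ∈ Q.1} ∪
          {Q : {P : Ideal A // P.IsPrime} | y ∈ Q.1} :=
        fun Q hQ => Q.2.mem_or_mem hQ
      have := (F.union_mem_iff).mp (Filter.mem_of_superset h hsub)
      exact this.imp (fun h => (hmem x).mpr h) (fun h => (hmem y).mpr h)
  have hu : u ∉ P₀ := by
    intro hcon
    have h1 := (hmem u).mp hcon
    have : ({Q : {P : Ideal A // P.IsPrime} | u ∈ Q.1} ∩
        {P : {P : Ideal A // P.IsPrime} | u ∉ P.1}) ∈ F := Filter.inter_mem h1 hFu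
    have hempty : ({Q : {P : Ideal A // P.IsPrime} | u ∈ Q.1} ∩
        {P : {P : Ideal A // P.IsPrime} | u ∉ P.1}) = ∅ := by
      ext Q; simp only [Set.mem_inter_iff, Set.mem_setOf_eq,
        Set.mem_empty_iff_false, iff_false]
      exact fun h => h.2 h.1
    exact F.empty_notMem (hempty ▸ this)
  refine ⟨⟨P₀, hprime⟩, hu, ?_⟩
  -- convergence: check on subbasic sets
  rw [TopologicalSpace.nhds_generateFrom]
  refine le_iInf fun s => le_iInf fun hs => Filter.le_principal_iff.mpr ?_
  obtain ⟨hxs, m, a, b, rfl⟩ := hs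
  obtain ⟨ha, hb⟩ := hxs
  have hbF : {Q : {P : Ideal A // P.IsPrime} | b ∉ Q.1} ∈ F := by
    have : {Q : {P : Ideal A // P.IsPrime} | b ∈ Q.1} ∉ F := fun h => hb ((hmem b).mpr h)
    have := (Ultrafilter.compl_mem_iff_notMem).mpr this
    simpa [Set.compl_setOf] using this
  have haF : {Q : {P : Ideal A // P.IsPrime} | ∀ i, a i ∈ Q.1} ∈ F := by
    have : (⋂ i, {Q : {P : Ideal A // P.IsPrime} | a i ∈ Q.1}) ∈ F :=
      Filter.iInter_mem.mpr fun i => (hmem (a i)).mp (ha i)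
    simpa [Set.setOf_forall] using this
  have : ({Q : {P : Ideal A // P.IsPrime} | ∀ i, a i ∈ Q.1} ∩
      {Q : {P : Ideal A // P.IsPrime} | b ∉ Q.1}) ∈ F := Filter.inter_mem haF hbF
  exact Filter.mem_of_superset this (fun Q hQ => ⟨hQ.1, hQ.2⟩)
end
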